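/- Let φ be a nontrivial multiplicative character of F_q and φ* its restriction to F_r^*. Then Σ_{x∈F_q^*, Tr_{q/r}(x+1)=0} φ(x) = (1/r)·G_q(φ, χ)·G_r(conj(φ*), χ*), where χ* is the restriction of χ to F_r. -/
import Mathlib

open Finset

private lemma exp_aux_add (p : ℕ) [Fact p.Prime] (u v : ZMod p) :
    Complex.exp (2 * Real.pi * Complex.I * (((u + v).val : ℂ)) / p) =
      Complex.exp (2 * Real.pi * Complex.I * ((u.val : ℂ)) / p) *
      Complex.exp (2 * Real.pi * Complex.I * ((v.val : ℂ)) / p) := by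
  have hp0 : (p : ℂ) ≠ 0 := Nat.cast_ne_zero.mpr (Fact.out : p.Prime).ne_zero
  rw [← Complex.exp_add, Complex.exp_eq_exp_iff_exists_int]
  refine ⟨-(((u.val + v.val) / p : ℕ) : ℤ), ?_⟩
  have hn : u.val + v.val = (u + v).val + p * ((u.val + v.val) / p) := by
    rw [ZMod.val_add]; exact (Nat.mod_add_div _ _).symm
  have hk : (u.val : ℂ) + (v.val : ℂ)
      = ((u + v).val : ℂ) + p * (((u.val + v.val) / p : ℕ) : ℂ) := by
    exact_mod_cast congrArg (Nat.cast : ℕ → ℂ) hn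
  have hinv : (p:ℂ) * (p:ℂ)⁻¹ = 1 := mul_inv_cancel₀ hp0
  set k : ℕ := (u.val + v.val) / p with hkdef
  push_cast [-ZMod.natCast_val]
  linear_combination (-(2 * (Real.pi:ℂ) * Complex.I * (p:ℂ)⁻¹)) * hk +
    (-(2 * (Real.pi:ℂ) * Complex.I * ((k : ℕ) : ℂ))) * hinv

private lemma exp_aux_ne_one (p : ℕ) [Fact p.Prime] {v : ZMod p} (hv : v ≠ 0) :
    Complex.exp (2 * Real.pi * Complex.I * (v.val : ℂ) / p) ≠ 1 := by
  have hp := (Fact.out : p.Prime)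
  have hp0 : (p : ℂ) ≠ 0 := Nat.cast_ne_zero.mpr hp.ne_zero
  intro h
  rw [Complex.exp_eq_one_iff] at h
  obtain ⟨n, hn⟩ := h
  rw [div_eq_iff hp0] at hn
  have hn' : (2 * (Real.pi : ℂ) * Complex.I) * (v.val : ℂ)
      = (2 * (Real.pi : ℂ) * Complex.I) * ((n : ℂ) * p) := by
    linear_combination hn
  have h2 : (v.val : ℂ) = (n : ℂ) * p :=
    mul_left_cancel₀ Complex.two_pi_I_ne_zero hn'
  have h3 : (v.val : ℤ) = n * p := by exact_mod_cast h2
  have h4 : (p : ℤ) ∣ (v.val : ℤ) := ⟨n, by linarith⟩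
  have h5 : p ∣ v.val := by exact_mod_cast h4
  have h6 : v.val = 0 := Nat.eq_zero_of_dvd_of_lt h5 (ZMod.val_lt v)
  haveI : NeZero p := ⟨hp.ne_zero⟩
  exact hv ((ZMod.val_eq_zero v).mp h6)

private lemma ortho_aux (p t : ℕ) [Fact p.Prime]
    (Fr Fq : Type) [Field Fr] [Fintype Fr] [DecidableEq Fr] [Field Fq] [Fintype Fq]
    [Algebra (ZMod p) Fr] [Algebra (ZMod p) Fq] [Algebra Fr Fq]
    [IsScalarTower (ZMod p) Fr Fq]
    (hr : Fintype.card Fr = p ^ t)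
    (χ : Fq → ℂ)
    (hχ : ∀ x : Fq, χ x = Complex.exp (2 * Real.pi * Complex.I *
      ((Algebra.trace (ZMod p) Fq x).val : ℂ) / (p : ℂ)))
    (z : Fq) :
    ∑ y : Fr, χ (algebraMap Fr Fq y * z) =
      if Algebra.trace Fr Fq z = 0 then ((p : ℂ) ^ t) else 0 := by
  haveI : Module.Finite (ZMod p) Fr := Module.Finite.of_finite
  haveI : Module.Finite Fr Fq := Module.Finite.of_finite
  have key : ∀ y : Fr, Algebra.trace (ZMod p) Fq (algebraMap Fr Fq y * z)
      = Algebra.trace (ZMod p) Fr (y * Algebra.trace Fr Fq z) := by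
    intro y
    rw [← Algebra.trace_trace (S := Fr)]
    congr 1
    rw [← Algebra.smul_def, map_smul, smul_eq_mul]
  by_cases hz : Algebra.trace Fr Fq z = 0
  · have h1 : ∀ y : Fr, χ (algebraMap Fr Fq y * z) = 1 := by
      intro y
      rw [hχ, key, hz, mul_zero, map_zero]
      simp
    rw [if_pos hz]
    simp only [h1, Finset.sum_const, Finset.card_univ, hr, nsmul_eq_mul, mul_one]
    push_cast
    ring
  · rw [if_neg hz]
    set c := Algebra.trace Fr Fq z with hc
    let ψ : AddChar Fr ℂ :=
      { toFun := fun y => χ (algebraMap Fr Fq y * z)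
        map_zero_eq_one' := by
          show χ (algebraMap Fr Fq 0 * z) = 1
          rw [hχ, key, zero_mul, map_zero]
          simp
        map_add_eq_mul' := by
          intro a b
          show χ (algebraMap Fr Fq (a + b) * z)
            = χ (algebraMap Fr Fq a * z) * χ (algebraMap Fr Fq b * z)
          rw [hχ, hχ, hχ, key, key, key, add_mul, map_add]
          exact exp_aux_add p _ _ }
    have hψa : ∀ y : Fr, ψ y = χ (algebraMap Fr Fq y * z) := fun _ => rfl
    have hψ : ψ ≠ 1 := by
      haveI : Algebra.IsSeparable (ZMod p) Fr := inferInstance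
      obtain ⟨u, hu⟩ := Algebra.trace_surjective (ZMod p) Fr 1
      intro h
      have hb : Algebra.trace (ZMod p) Fr ((u * c⁻¹) * c) ≠ 0 := by
        rw [mul_assoc, inv_mul_cancel₀ hz, mul_one, hu]
        exact one_ne_zero
      have h1 : ψ (u * c⁻¹) = 1 := by rw [h, AddChar.one_apply]
      rw [hψa, hχ, key] at h1
      exact exp_aux_ne_one p hb h1
    have := AddChar.sum_eq_zero_of_ne_one hψ
    simpa only [hψa] using this

theorem stmt5 (p t s : ℕ) [Fact p.Prime] (hp2 : Odd p) (ht : 0 < t) (hs : 0 < s)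
    (hps : ¬ p ∣ s)
    (Fr Fq : Type) [Field Fr] [Fintype Fr] [DecidableEq Fr]
    [Field Fq] [Fintype Fq] [DecidableEq Fq]
    [Algebra (ZMod p) Fr] [Algebra (ZMod p) Fq] [Algebra Fr Fq]
    [IsScalarTower (ZMod p) Fr Fq]
    (hr : Fintype.card Fr = p ^ t) (hq : Fintype.card Fq = (p ^ t) ^ s)
    (χ : Fq → ℂ)
    (hχ : ∀ x : Fq, χ x = Complex.exp (2 * Real.pi * Complex.I *
      ((Algebra.trace (ZMod p) Fq x).val : ℂ) / (p : ℂ)))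
    (φ : MulChar Fq ℂ) (hφ : φ ≠ 1) :
    ∑ x ∈ Finset.univ.filter
        (fun x : Fq => x ≠ 0 ∧ Algebra.trace Fr Fq (x + 1) = 0), φ x =
      (1 / ((p : ℂ) ^ t)) *
        (∑ x ∈ Finset.univ.filter (fun x : Fq => x ≠ 0), φ x * χ x) *
        (∑ y ∈ Finset.univ.filter (fun y : Fr => y ≠ 0),
          (starRingEnd ℂ) (φ (algebraMap Fr Fq y)) * χ (algebraMap Fr Fq y)) := by
  have hp0 : ((p : ℂ) ^ t) ≠ 0 :=
    pow_ne_zero _ (Nat.cast_ne_zero.mpr (Fact.out : p.Prime).ne_zero)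
  have hφ0 : φ (0 : Fq) = 0 := by
    exact MulChar.map_nonunit φ (by simp)
  have hχ0 : χ 0 = 1 := by rw [hχ]; simp
  have hχadd : ∀ a b : Fq, χ (a + b) = χ a * χ b := by
    intro a b; rw [hχ, hχ, hχ, map_add]; exact exp_aux_add p _ _
  set G : ℂ := ∑ x ∈ Finset.univ.filter (fun x : Fq => x ≠ 0), φ x * χ x with hG
  -- sum over all x of φ x * χ (c * x) for c ≠ 0
  have hGfull : ∑ x : Fq, φ x * χ x = G := by
    rw [hG, Finset.filter_ne', Finset.sum_erase _ (by rw [hφ0, zero_mul])]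
  have hsum0 : ∑ x ∈ Finset.univ.filter (fun x : Fq => x ≠ 0), φ x = 0 := by
    rw [Finset.filter_ne', Finset.sum_erase _ hφ0]
    exact MulChar.sum_eq_zero_of_ne_one hφ
  -- Step 1: filter splitting
  have h1 : (Finset.univ.filter
        (fun x : Fq => x ≠ 0 ∧ Algebra.trace Fr Fq (x + 1) = 0))
      = (Finset.univ.filter (fun x : Fq => x ≠ 0)).filter
          (fun x => Algebra.trace Fr Fq (x + 1) = 0) := by
    rw [Finset.filter_filter]
  rw [h1, Finset.sum_filter]
  -- Step 2: indicator via ortho_aux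
  have h2 : ∀ x : Fq, (if Algebra.trace Fr Fq (x + 1) = 0 then φ x else 0)
      = (1 / ((p : ℂ) ^ t)) * ∑ y : Fr, φ x * χ (algebraMap Fr Fq y * (x + 1)) := by
    intro x
    rw [← Finset.mul_sum, ortho_aux p t Fr Fq hr χ hχ (x + 1)]
    by_cases h : Algebra.trace Fr Fq (x + 1) = 0
    · rw [if_pos h, if_pos h]; field_simp
    · rw [if_neg h, if_neg h]; ring
  simp_rw [h2]
  rw [← Finset.mul_sum, Finset.sum_comm]
  -- split off y = 0
  rw [← Finset.add_sum_erase _ _ (Finset.mem_univ (0 : Fr))]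
  have hy0 : ∑ x ∈ Finset.univ.filter (fun x : Fq => x ≠ 0),
      φ x * χ (algebraMap Fr Fq 0 * (x + 1)) = 0 := by
    simp only [map_zero, zero_mul, hχ0, mul_one]
    exact hsum0
  rw [hy0, zero_add]
  -- evaluate the inner sum for y ≠ 0
  have h5 : ∀ y : Fr, y ∈ Finset.univ.erase (0 : Fr) →
      (∑ x ∈ Finset.univ.filter (fun x : Fq => x ≠ 0),
        φ x * χ (algebraMap Fr Fq y * (x + 1)))
      = (starRingEnd ℂ) (φ (algebraMap Fr Fq y)) * χ (algebraMap Fr Fq y) * G := by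
    intro y hy
    have hyne : y ≠ 0 := Finset.ne_of_mem_erase hy
    set c : Fq := algebraMap Fr Fq y with hcdef
    have hcne : c ≠ 0 := fun h => hyne ((algebraMap Fr Fq).injective (h.trans (map_zero _).symm))
    have hexpand : ∀ x : Fq, φ x * χ (c * (x + 1)) = φ x * χ (c * x) * χ c := by
      intro x; rw [mul_add, mul_one, hχadd]; ring
    calc ∑ x ∈ Finset.univ.filter (fun x : Fq => x ≠ 0), φ x * χ (c * (x + 1))
        = ∑ x : Fq, φ x * χ (c * x) * χ c := by
          rw [Finset.filter_ne', Finset.sum_erase _ (by simp [hφ0])]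
          exact Finset.sum_congr rfl fun x _ => hexpand x
      _ = ∑ u : Fq, φ (c⁻¹ * u) * χ u * χ c := by
          apply Fintype.sum_bijective (fun x : Fq => c * x)
            (mulLeft_bijective₀ c hcne)
          intro x
          rw [inv_mul_cancel_left₀ hcne]
      _ = φ c⁻¹ * χ c * ∑ u : Fq, φ u * χ u := by
          rw [Finset.mul_sum]
          exact Finset.sum_congr rfl fun u _ => by rw [map_mul]; ring
      _ = (starRingEnd ℂ) (φ c) * χ c * G := by
          rw [hGfull]
          congr 2
          rw [← MulChar.inv_apply', ← MulChar.star_apply']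
          rfl
  rw [Finset.sum_congr rfl h5, ← Finset.sum_mul, Finset.filter_ne']
  ring
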